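/- For every integer n ≥ 2 and every real t, P(Z^L > t) ≤ P(Z > t) ≤ P(Z^U > t); that is, Z^L is stochastically dominated by Z, and Z is stochastically dominated by Z^U. -/

import Mathlib

open MeasureTheory ProbabilityTheory Filter

/-- The Markov chain modeling the CD-P heuristic (unbounded reach), driven by a
sequence `U` of i.i.d. uniform random variables on `[0,1]`: it starts at `n`, and from a
state `m ≥ 1` it jumps to a uniformly chosen state in `{0, …, m-1}` (state `0` is absorbing). -/
noncomputable def chainR {Ω : Type*} (n : ℕ) (U : ℕ → Ω → ℝ) : ℕ → Ω → ℕ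
  | 0 => fun _ => n
  | (t + 1) => fun ω => ⌊(chainR n U t ω : ℝ) * U (t + 1) ω⌋₊

/-- `hitZ n U` is the hitting time of `0` for the chain `chainR n U`. -/
noncomputable def hitZ {Ω : Type*} (n : ℕ) (U : ℕ → Ω → ℝ) (ω : Ω) : ℕ :=
  sInf {t | chainR n U t ω = 0}

/-- `Z^U := min { t ≥ 1 : n·U_1⋯U_t < 1 }`. -/
noncomputable def ZU {Ω : Type*} (n : ℕ) (U : ℕ → Ω → ℝ) (ω : Ω) : ℕ :=
  sInf {t | 1 ≤ t ∧ (n : ℝ) * ∏ i ∈ Finset.Icc 1 t, U i ω < 1}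

/-- `Z^L := min { t ≥ 1 : n·U_1⋯U_t < t + 1 }`. -/
noncomputable def ZL {Ω : Type*} (n : ℕ) (U : ℕ → Ω → ℝ) (ω : Ω) : ℕ :=
  sInf {t | 1 ≤ t ∧ (n : ℝ) * ∏ i ∈ Finset.Icc 1 t, U i ω < (t : ℝ) + 1}

lemma chain_le {Ω : Type*} {n : ℕ} {U : ℕ → Ω → ℝ} {ω : Ω}
    (hU : ∀ i, U i ω ∈ Set.Icc (0:ℝ) 1) (t : ℕ) :
    (chainR n U t ω : ℝ) ≤ (n : ℝ) * ∏ i ∈ Finset.Icc 1 t, U i ω := by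
  induction t with
  | zero => simp [chainR]
  | succ t ih =>
    rw [Finset.prod_Icc_succ_top (Nat.le_add_left 1 t)]
    calc (chainR n U (t+1) ω : ℝ) = (⌊(chainR n U t ω : ℝ) * U (t+1) ω⌋₊ : ℝ) := rfl
      _ ≤ (chainR n U t ω : ℝ) * U (t+1) ω :=
          Nat.floor_le (mul_nonneg (Nat.cast_nonneg _) (hU (t+1)).1)
      _ ≤ ((n : ℝ) * ∏ i ∈ Finset.Icc 1 t, U i ω) * U (t+1) ω :=
          mul_le_mul_of_nonneg_right ih (hU (t+1)).1
      _ = (n : ℝ) * ((∏ i ∈ Finset.Icc 1 t, U i ω) * U (t+1) ω) := by ring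

lemma chain_ge {Ω : Type*} {n : ℕ} {U : ℕ → Ω → ℝ} {ω : Ω}
    (hU : ∀ i, U i ω ∈ Set.Icc (0:ℝ) 1) (t : ℕ) :
    (n : ℝ) * ∏ i ∈ Finset.Icc 1 t, U i ω - t ≤ (chainR n U t ω : ℝ) := by
  induction t with
  | zero => simp [chainR]
  | succ t ih =>
    rw [Finset.prod_Icc_succ_top (Nat.le_add_left 1 t)]
    have h1 : (chainR n U t ω : ℝ) * U (t+1) ω - 1 < (chainR n U (t+1) ω : ℝ) := by
      have := Nat.sub_one_lt_floor ((chainR n U t ω : ℝ) * U (t+1) ω)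
      exact_mod_cast this
    have h2 := (hU (t+1)).1
    have h3 := (hU (t+1)).2
    have h4 : (chainR n U t ω : ℝ) * U (t+1) ω ≥
        ((n : ℝ) * ∏ i ∈ Finset.Icc 1 t, U i ω - t) * U (t+1) ω :=
      mul_le_mul_of_nonneg_right ih h2
    have h5 : (t : ℝ) * U (t+1) ω ≤ t := by
      nlinarith [Nat.cast_nonneg (α := ℝ) t]
    push_cast
    nlinarith

lemma cdp_key {Ω : Type*} {n : ℕ} {U : ℕ → Ω → ℝ} {ω : Ω} (hn : 2 ≤ n)
    (hU : ∀ i, U i ω ∈ Set.Icc (0:ℝ) 1)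
    (hex : {s | 1 ≤ s ∧ (n : ℝ) * ∏ i ∈ Finset.Icc 1 s, U i ω < 1}.Nonempty) :
    ZL n U ω ≤ hitZ n U ω ∧ hitZ n U ω ≤ ZU n U ω := by
  have hmem := Nat.sInf_mem hex
  have hchainT : chainR n U (ZU n U ω) ω = 0 := by
    have h1 := chain_le (n := n) hU (ZU n U ω)
    have h2 : (chainR n U (ZU n U ω) ω : ℝ) < 1 := lt_of_le_of_lt h1 hmem.2
    exact Nat.lt_one_iff.mp (by exact_mod_cast h2)
  have hne : {s | chainR n U s ω = 0}.Nonempty := ⟨ZU n U ω, hchainT⟩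
  have hhit : chainR n U (hitZ n U ω) ω = 0 := Nat.sInf_mem hne
  have hle : hitZ n U ω ≤ ZU n U ω := Nat.sInf_le hchainT
  have hpos : 1 ≤ hitZ n U ω := by
    rcases Nat.eq_zero_or_pos (hitZ n U ω) with h0 | h
    · rw [h0] at hhit; simp only [chainR] at hhit; omega
    · exact h
  refine ⟨Nat.sInf_le ⟨hpos, ?_⟩, hle⟩
  have hg := chain_ge (n := n) hU (hitZ n U ω)
  rw [hhit] at hg
  push_cast at hg
  linarith

lemma cdp_bad_null
    (Ω : Type*) [MeasureSpace Ω] [IsProbabilityMeasure (ℙ : Measure Ω)]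
    (U : ℕ → Ω → ℝ) (hmeas : ∀ i, Measurable (U i))
    (hindep : iIndepFun U ℙ)
    (hunif : ∀ i, Measure.map (U i) ℙ = (volume : Measure ℝ).restrict (Set.Icc 0 1))
    (n : ℕ) (hn : 2 ≤ n) :
    ℙ {ω | (∀ i, U i ω ∈ Set.Icc (0:ℝ) 1) ∧
        ∀ s, 1 ≤ s → ¬ ((n : ℝ) * ∏ i ∈ Finset.Icc 1 s, U i ω < 1)} = 0 := by
  set Bad := {ω | (∀ i, U i ω ∈ Set.Icc (0:ℝ) 1) ∧
      ∀ s, 1 ≤ s → ¬ ((n : ℝ) * ∏ i ∈ Finset.Icc 1 s, U i ω < 1)} with hBadDef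
  set r : ENNReal := ENNReal.ofReal (1 - 1/n) with hr
  have hnpos : (0:ℝ) < n := by positivity
  have hsub : ∀ k : ℕ, Bad ⊆ ⋂ i ∈ Finset.Icc 1 k, U i ⁻¹' Set.Ici (1/(n:ℝ)) := by
    intro k ω hω
    simp only [Set.mem_iInter, Set.mem_preimage, Set.mem_Ici]
    intro i hi
    obtain ⟨hi1, _⟩ := Finset.mem_Icc.mp hi
    obtain ⟨j, rfl⟩ : ∃ j, i = j + 1 := ⟨i - 1, by omega⟩
    have hge : (1:ℝ) ≤ (n : ℝ) * ∏ l ∈ Finset.Icc 1 (j+1), U l ω :=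
      not_lt.mp (hω.2 (j+1) (by omega))
    have hprodle : ∏ l ∈ Finset.Icc 1 (j+1), U l ω ≤ U (j+1) ω := by
      rw [Finset.prod_Icc_succ_top (Nat.le_add_left 1 j)]
      have hple : ∏ l ∈ Finset.Icc 1 j, U l ω ≤ 1 :=
        Finset.prod_le_one (fun l _ => (hω.1 l).1) (fun l _ => (hω.1 l).2)
      nlinarith [(hω.1 (j+1)).1]
    rw [div_le_iff₀ hnpos]
    nlinarith
  have hfactor : ∀ i : ℕ, ℙ (U i ⁻¹' Set.Ici (1/(n:ℝ))) = r := by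
    intro i
    rw [← Measure.map_apply (hmeas i) measurableSet_Ici, hunif i,
      Measure.restrict_apply measurableSet_Ici, Set.inter_comm]
    have hset : Set.Icc (0:ℝ) 1 ∩ Set.Ici (1/(n:ℝ)) = Set.Icc (1/(n:ℝ)) 1 := by
      ext x
      simp only [Set.mem_inter_iff, Set.mem_Icc, Set.mem_Ici]
      constructor
      · rintro ⟨⟨_, h1⟩, h2⟩; exact ⟨h2, h1⟩
      · rintro ⟨h1, h2⟩; exact ⟨⟨le_trans (by positivity) h1, h2⟩, h1⟩
    rw [hset, Real.volume_Icc]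
  have hbound : ∀ k : ℕ, ℙ Bad ≤ r ^ k := by
    intro k
    calc ℙ Bad ≤ ℙ (⋂ i ∈ Finset.Icc 1 k, U i ⁻¹' Set.Ici (1/(n:ℝ))) :=
          measure_mono (hsub k)
      _ = ∏ i ∈ Finset.Icc 1 k, ℙ (U i ⁻¹' Set.Ici (1/(n:ℝ))) :=
          hindep.meas_biInter (fun i _ => ⟨Set.Ici (1/(n:ℝ)), measurableSet_Ici, rfl⟩)
      _ = r ^ k := by
          rw [Finset.prod_congr rfl (fun i _ => hfactor i), Finset.prod_const,
            Nat.card_Icc, Nat.add_sub_cancel]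
  have hrlt : r < 1 := by
    rw [hr, ← ENNReal.ofReal_one]
    have h2 : (2:ℝ) ≤ n := by exact_mod_cast hn
    refine ENNReal.ofReal_lt_ofReal_iff_of_nonneg ?_ |>.mpr ?_
    · rw [sub_nonneg, div_le_one hnpos]; linarith
    have : (0:ℝ) < 1/n := by positivity
    linarith
  have htend := ENNReal.tendsto_pow_atTop_nhds_zero_of_lt_one hrlt
  have := ge_of_tendsto' htend hbound
  exact le_antisymm this zero_le

/-- For every integer `n ≥ 2` and every real `t`,
`P(Z^L > t) ≤ P(Z > t) ≤ P(Z^U > t)`, i.e. `Z^L ≼ Z ≼ Z^U` stochastically. -/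
theorem cdp_stochastic_domination
    (Ω : Type*) [MeasureSpace Ω] [IsProbabilityMeasure (ℙ : Measure Ω)]
    (U : ℕ → Ω → ℝ) (hmeas : ∀ i, Measurable (U i))
    (hindep : iIndepFun U ℙ)
    (hunif : ∀ i, Measure.map (U i) ℙ = (volume : Measure ℝ).restrict (Set.Icc 0 1))
    (n : ℕ) (hn : 2 ≤ n) (t : ℝ) :
    ℙ {ω | t < (ZL n U ω : ℝ)} ≤ ℙ {ω | t < (hitZ n U ω : ℝ)} ∧
      ℙ {ω | t < (hitZ n U ω : ℝ)} ≤ ℙ {ω | t < (ZU n U ω : ℝ)} := by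
  have hUae : ∀ᵐ ω ∂(ℙ : Measure Ω), ∀ i, U i ω ∈ Set.Icc (0:ℝ) 1 := by
    rw [ae_all_iff]
    intro i
    have h1 : ℙ (U i ⁻¹' Set.Icc 0 1) = 1 := by
      rw [← Measure.map_apply (hmeas i) measurableSet_Icc, hunif i,
        Measure.restrict_apply measurableSet_Icc]
      simp [Real.volume_Icc]
    rw [ae_iff]
    have h2 : {ω | ¬ U i ω ∈ Set.Icc (0:ℝ) 1} = (U i ⁻¹' Set.Icc 0 1)ᶜ := rfl
    rw [h2, measure_compl ((hmeas i) measurableSet_Icc) (measure_ne_top _ _), h1]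
    simp
  have hBad := cdp_bad_null Ω U hmeas hindep hunif n hn
  have hexae : ∀ᵐ ω ∂(ℙ : Measure Ω), (∀ i, U i ω ∈ Set.Icc (0:ℝ) 1) →
      {s | 1 ≤ s ∧ (n : ℝ) * ∏ i ∈ Finset.Icc 1 s, U i ω < 1}.Nonempty := by
    rw [ae_iff]
    refine measure_mono_null ?_ hBad
    intro ω h
    push_neg at h
    obtain ⟨h1, h2⟩ := h
    exact ⟨h1, fun s hs hlt => Set.eq_empty_iff_forall_notMem.mp h2 s ⟨hs, hlt⟩⟩
  have hkey : ∀ᵐ ω ∂(ℙ : Measure Ω),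
      ZL n U ω ≤ hitZ n U ω ∧ hitZ n U ω ≤ ZU n U ω := by
    filter_upwards [hUae, hexae] with ω h1 h2
    exact cdp_key hn h1 (h2 h1)
  constructor
  · refine measure_mono_ae ?_
    filter_upwards [hkey] with ω hk
    exact fun ht => lt_of_lt_of_le ht (by exact_mod_cast hk.1)
  · refine measure_mono_ae ?_
    filter_upwards [hkey] with ω hk
    exact fun ht => lt_of_lt_of_le ht (by exact_mod_cast hk.2)
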